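/- If a quadrature rule with points {ζᵢ} and weights {wᵢ^ζ} on [0,1] integrates exactly all polynomials of degree at most 2k+1 against the weight (1−ζ), and a rule {ηⱼ}, {wⱼ^η} integrates exactly all polynomials of degree at most 2k+1 against weight 1, then the product rule with points (ζᵢ, (1−ζᵢ)ηⱼ) and weights wᵢ^ζ wⱼ^η integrates exactly over the unit triangle every bivariate polynomial of total degree at most 2k. -/
import Mathlib


open Polynomial

/-- If a rule `{ζᵢ},{wᵢ^ζ}` on `[0,1]` is exact for polynomials of degree at
most `2k+1` against the weight `(1−ζ)`, and a rule `{ηⱼ},{wⱼ^η}` is exact for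
polynomials of degree at most `2k+1` against weight `1`, then the product rule
with points `(ζᵢ, (1−ζᵢ)ηⱼ)` and weights `wᵢ^ζ wⱼ^η` integrates exactly over
the unit triangle every bivariate polynomial of total degree at most `2k`. -/
theorem duffy_product_quadrature (k : ℕ)
    {ι ι' : Type*} [Fintype ι] [Fintype ι']
    (ζ wζ : ι → ℝ) (η wη : ι' → ℝ)
    (hζ : ∀ p : Polynomial ℝ, p.natDegree ≤ 2 * k + 1 →
      ∑ i, p.eval (ζ i) * wζ i = ∫ t in (0:ℝ)..1, p.eval t * (1 - t))
    (hη : ∀ p : Polynomial ℝ, p.natDegree ≤ 2 * k + 1 →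
      ∑ j, p.eval (η j) * wη j = ∫ t in (0:ℝ)..1, p.eval t) :
    ∀ f : MvPolynomial (Fin 2) ℝ, f.totalDegree ≤ 2 * k →
      ∑ i, ∑ j, MvPolynomial.eval ![ζ i, (1 - ζ i) * η j] f * (wζ i * wη j) =
        ∫ x in (0:ℝ)..1, ∫ y in (0:ℝ)..(1 - x), MvPolynomial.eval ![x, y] f := by
  intro f hf
  -- key monomial identity
  have key : ∀ a b : ℕ, a + b ≤ 2 * k →
      (∑ i, ∑ j, (ζ i)^a * ((1 - ζ i) * η j)^b * (wζ i * wη j)) =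
        ∫ x in (0:ℝ)..1, x^a * ((1-x)^(b+1)/((b:ℝ)+1)) := by
    intro a b hab
    have hη' := hη (X^b) (by
      simpa using le_trans (le_trans (Nat.le_add_left b a) hab) (Nat.le_succ _))
    simp only [eval_pow, eval_X] at hη'
    rw [integral_pow] at hη'
    have hdeg : (X^a * ((1:ℝ[X]) - X)^b).natDegree ≤ 2 * k + 1 := by
      refine le_trans (natDegree_mul_le) ?_
      have h1 : ((1:ℝ[X]) - X).natDegree ≤ 1 :=
        le_trans (natDegree_sub_le _ _) (by simp)
      have h2 : (((1:ℝ[X]) - X)^b).natDegree ≤ b :=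
        le_trans (natDegree_pow_le) (by
          calc b * ((1:ℝ[X]) - X).natDegree ≤ b * 1 := Nat.mul_le_mul_left b h1
            _ = b := Nat.mul_one b)
      calc (X^a : ℝ[X]).natDegree + (((1:ℝ[X]) - X)^b).natDegree
          ≤ a + b := by rw [natDegree_X_pow]; exact Nat.add_le_add_left h2 a
        _ ≤ 2 * k + 1 := le_trans hab (Nat.le_succ _)
    have hζ' := hζ (X^a * ((1:ℝ[X]) - X)^b) hdeg
    simp only [eval_mul, eval_pow, eval_sub, eval_one, eval_X] at hζ'
    calc (∑ i, ∑ j, (ζ i)^a * ((1 - ζ i) * η j)^b * (wζ i * wη j))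
        = (∑ i, (ζ i)^a * (1 - ζ i)^b * wζ i) * (∑ j, (η j)^b * wη j) := by
          rw [Finset.sum_mul_sum]
          refine Finset.sum_congr rfl fun i _ => Finset.sum_congr rfl fun j _ => ?_
          rw [mul_pow]; ring
      _ = (∫ t in (0:ℝ)..1, t^a * (1-t)^b * (1-t)) * ((1^(b+1) - 0^(b+1))/((b:ℝ)+1)) := by
          rw [hζ', hη']
      _ = (∫ t in (0:ℝ)..1, t^a * (1-t)^(b+1)) * (1/((b:ℝ)+1)) := by
          congr 1
          · apply intervalIntegral.integral_congr
            intro t _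
            simp only [pow_succ]; ring
          · norm_num
      _ = ∫ x in (0:ℝ)..1, x^a * ((1-x)^(b+1)/((b:ℝ)+1)) := by
          rw [← intervalIntegral.integral_mul_const]
          apply intervalIntegral.integral_congr
          intro x _; ring
  -- expand f into monomials
  have hmem : ∀ d ∈ f.support, d 0 + d 1 ≤ 2 * k := by
    intro d hd
    have h1 : (d.sum fun _ e => e) ≤ f.totalDegree := MvPolynomial.le_totalDegree hd
    have h2 : (d.sum fun _ e => e) = d 0 + d 1 := by
      rw [Finsupp.sum_fintype _ _ (fun _ => rfl), Fin.sum_univ_two]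
    omega
  have heval : ∀ v : Fin 2 → ℝ, MvPolynomial.eval v f
      = ∑ d ∈ f.support, f.coeff d * ((v 0)^(d 0) * (v 1)^(d 1)) := by
    intro v
    rw [MvPolynomial.eval_eq']
    exact Finset.sum_congr rfl fun d _ => by rw [Fin.prod_univ_two]
  -- LHS
  have hL : (∑ i, ∑ j, MvPolynomial.eval ![ζ i, (1 - ζ i) * η j] f * (wζ i * wη j))
      = ∑ d ∈ f.support, f.coeff d *
          ∑ i, ∑ j, (ζ i)^(d 0) * ((1 - ζ i) * η j)^(d 1) * (wζ i * wη j) := by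
    simp only [heval, Matrix.cons_val_zero, Matrix.cons_val_one, Matrix.head_cons]
    simp only [Finset.sum_mul]
    rw [show (∑ i, ∑ j, ∑ d ∈ f.support,
        f.coeff d * ((ζ i)^(d 0) * ((1 - ζ i) * η j)^(d 1)) * (wζ i * wη j))
      = ∑ d ∈ f.support, ∑ i, ∑ j,
        f.coeff d * ((ζ i)^(d 0) * ((1 - ζ i) * η j)^(d 1)) * (wζ i * wη j) from by
      have step : ∀ i : ι, (∑ j, ∑ d ∈ f.support,
          f.coeff d * ((ζ i)^(d 0) * ((1 - ζ i) * η j)^(d 1)) * (wζ i * wη j))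
        = ∑ d ∈ f.support, ∑ j,
          f.coeff d * ((ζ i)^(d 0) * ((1 - ζ i) * η j)^(d 1)) * (wζ i * wη j) :=
        fun i => Finset.sum_comm
      simp only [step]
      exact Finset.sum_comm]
    refine Finset.sum_congr rfl fun d _ => ?_
    rw [Finset.mul_sum]
    refine Finset.sum_congr rfl fun i _ => ?_
    rw [Finset.mul_sum]
    exact Finset.sum_congr rfl fun j _ => by ring
  -- RHS
  have hR : (∫ x in (0:ℝ)..1, ∫ y in (0:ℝ)..(1 - x), MvPolynomial.eval ![x, y] f)
      = ∑ d ∈ f.support, f.coeff d *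
          ∫ x in (0:ℝ)..1, x^(d 0) * ((1-x)^(d 1 + 1)/((d 1 : ℝ)+1)) := by
    have hinner : ∀ x : ℝ, (∫ y in (0:ℝ)..(1 - x), MvPolynomial.eval ![x, y] f)
        = ∑ d ∈ f.support, f.coeff d * (x^(d 0) * ((1-x)^(d 1 + 1)/((d 1 : ℝ)+1))) := by
      intro x
      have : (∫ y in (0:ℝ)..(1 - x), MvPolynomial.eval ![x, y] f)
          = ∫ y in (0:ℝ)..(1 - x), ∑ d ∈ f.support,
              f.coeff d * (x^(d 0) * y^(d 1)) := by
        apply intervalIntegral.integral_congr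
        intro y _
        simpa using heval ![x, y]
      rw [this, intervalIntegral.integral_finset_sum]
      · refine Finset.sum_congr rfl fun d _ => ?_
        rw [intervalIntegral.integral_const_mul, intervalIntegral.integral_const_mul,
          integral_pow]
        simp
      · intro d _
        exact Continuous.intervalIntegrable
          (continuous_const.mul (continuous_const.mul (continuous_pow _))) _ _
    have : (∫ x in (0:ℝ)..1, ∫ y in (0:ℝ)..(1 - x), MvPolynomial.eval ![x, y] f)
        = ∫ x in (0:ℝ)..1, ∑ d ∈ f.support,
            f.coeff d * (x^(d 0) * ((1-x)^(d 1 + 1)/((d 1 : ℝ)+1))) := by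
      apply intervalIntegral.integral_congr
      intro x _
      exact hinner x
    rw [this, intervalIntegral.integral_finset_sum]
    · exact Finset.sum_congr rfl fun d _ => by
        rw [intervalIntegral.integral_const_mul]
    · intro d _
      exact Continuous.intervalIntegrable
        (continuous_const.mul ((continuous_pow _).mul
          (((continuous_const.sub continuous_id).pow _).div_const _))) _ _
  rw [hL, hR]
  exact Finset.sum_congr rfl fun d hd => by rw [key (d 0) (d 1) (hmem d hd)]
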